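/- For n ≥ 1, the number of plane trees with n edges having no young leaves equals the Motzkin number M_{n-1}. -/

import Mathlib

/-- A plane tree: a root together with an ordered (possibly empty) list of subtrees. -/
inductive PlaneTree where
  | node : List PlaneTree → PlaneTree

namespace PlaneTree

/-- The number of edges of a plane tree. -/
def edges : PlaneTree → ℕ
  | node ts => (ts.attach.map (fun t => edges t.1 + 1)).sum
decreasing_by have := List.sizeOf_lt_of_mem t.2; simp at *; omega

/-- Indicator that a tree is a single vertex (i.e. the corresponding child is a leaf). -/
def isLeafInd : PlaneTree → ℕ
  | node [] => 1
  | node (_ :: _) => 0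

/-- The number of old leaves: leaves that are the leftmost child of their parent. -/
def oldLeaves : PlaneTree → ℕ
  | node [] => 0
  | node (t :: ts) =>
      isLeafInd t + oldLeaves t + (ts.attach.map (fun s => oldLeaves s.1)).sum
decreasing_by
  · simp; omega
  · have := List.sizeOf_lt_of_mem s.2; simp at *; omega

/-- The number of young leaves: leaves that are not the leftmost child of their parent. -/
def youngLeaves : PlaneTree → ℕ
  | node [] => 0
  | node (t :: ts) =>
      youngLeaves t + (ts.attach.map (fun s => isLeafInd s.1 + youngLeaves s.1)).sum
decreasing_by
  · simp; omega
  · have := List.sizeOf_lt_of_mem s.2; simp at *; omega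

end PlaneTree

/-- The `m`-th Motzkin number, `M_m = Σ_k C(m,2k)·Catalan(k)`. -/
def motzkin (m : ℕ) : ℕ := ∑ k ∈ Finset.range (m + 1), m.choose (2 * k) * catalan k

open Finset

/-- hockey stick -/
lemma hockey (m b : ℕ) : ∑ j ∈ range (m + 1), j.choose b = (m + 1).choose (b + 1) := by
  induction m with
  | zero => simp [Nat.choose]
  | succ m ih => rw [sum_range_succ, ih, Nat.choose_succ_succ (m + 1) b, Nat.add_comm]

/-- Vandermonde with upper index summation -/
lemma VU (m : ℕ) : ∀ a b : ℕ,
    ∑ i ∈ range (m + 1), (i.choose a) * ((m - i).choose b) = (m + 1).choose (a + b + 1) := by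
  induction m with
  | zero => intro a b; cases a <;> cases b <;> simp [Nat.choose]
  | succ m ih =>
    intro a b
    rw [Finset.sum_range_succ' (fun i => (i.choose a) * ((m + 1 - i).choose b))]
    cases a with
    | zero =>
      have h1 : ∀ i ∈ range (m + 1), (i + 1).choose 0 * (m + 1 - (i + 1)).choose b
          = (m - i).choose b := by
        intro i hi; simp
      have h2 : ∑ i ∈ range (m + 1), (m - i).choose b = ∑ j ∈ range (m + 1), j.choose b := by
        rw [← Finset.sum_range_reflect]
        apply Finset.sum_congr rfl; intro i hi; congr 1; simp at hi; omega
      rw [Finset.sum_congr rfl h1, h2, hockey]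
      simp only [Nat.choose_zero_right, one_mul, Nat.sub_zero, Nat.zero_add]
      rw [Nat.choose_succ_succ (m + 1) b]
      simp [Nat.succ_eq_add_one]
      omega
    | succ a =>
      have h1 : ∀ i ∈ range (m + 1), ((i + 1).choose (a + 1)) * ((m + 1 - (i + 1)).choose b)
          = i.choose (a + 1) * ((m - i).choose b) + i.choose a * ((m - i).choose b) := by
        intro i hi
        have hmi : m + 1 - (i + 1) = m - i := by omega
        rw [hmi, Nat.choose_succ_succ', Nat.add_mul]; omega
      rw [Finset.sum_congr rfl h1, Finset.sum_add_distrib, ih (a + 1) b, ih a b]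
      have : a + 1 + b + 1 = (a + b + 1) + 1 := by omega
      rw [this, show (m+1+1) = (m+1)+1 from rfl, Nat.choose_succ_succ (m + 1) (a + b + 1)]
      simp
      omega

lemma triangle_eq (f : ℕ → ℕ → ℕ) (N : ℕ) :
    ∑ p ∈ range N, ∑ q ∈ range (N - p), f p q
      = ∑ k ∈ range N, ∑ p ∈ range (k + 1), f p (k - p) := by
  induction N with
  | zero => simp
  | succ N ih =>
    rw [sum_range_succ, sum_range_succ]
    have h1 : ∀ p ∈ range N, ∑ q ∈ range (N + 1 - p), f p q
        = ∑ q ∈ range (N - p), f p q + f p (N - p) := by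
      intro p hp
      simp at hp
      rw [show N + 1 - p = (N - p) + 1 by omega, sum_range_succ]
    rw [Finset.sum_congr rfl h1, Finset.sum_add_distrib, ih]
    have h2 : ∑ p ∈ range (N + 1), f p (N - p)
        = ∑ p ∈ range N, f p (N - p) + f N (N - N) := sum_range_succ _ _
    rw [h2]
    simp
    omega

lemma square_to_triangle (f : ℕ → ℕ → ℕ) (N : ℕ) (hf : ∀ p q, N ≤ p + q + 1 → f p q = 0) :
    ∑ p ∈ range N, ∑ q ∈ range N, f p q
      = ∑ k ∈ range N, ∑ p ∈ range (k + 1), f p (k - p) := by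
  rw [← triangle_eq]
  apply Finset.sum_congr rfl
  intro p hp
  rw [Finset.sum_subset (Finset.range_subset_range.mpr (by omega : N - p ≤ N))]
  intro q hq hq'
  simp at hq hq'
  exact hf p q (by omega)

lemma motzkin_pad (m N : ℕ) (h : m + 1 ≤ N) :
    motzkin m = ∑ k ∈ range N, m.choose (2 * k) * catalan k := by
  rw [motzkin, Finset.sum_subset (Finset.range_subset_range.mpr h)]
  intro k hk hk'
  simp at hk hk'
  rw [Nat.choose_eq_zero_of_lt (by omega), zero_mul]

lemma motzkin_zero : motzkin 0 = 1 := by simp [motzkin]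

lemma cat_conv (k : ℕ) :
    ∑ p ∈ range (k + 1), catalan p * catalan (k - p) = catalan (k + 1) := by
  rw [catalan_succ]
  exact (Fin.sum_univ_eq_sum_range (fun i => catalan i * catalan (k - i)) (k + 1)).symm

lemma motzkin_rec (n : ℕ) :
    motzkin (n + 1) = motzkin n + ∑ i ∈ range n, motzkin i * motzkin (n - 1 - i) := by
  cases n with
  | zero => simp [motzkin, Finset.sum_range_succ]
  | succ m =>
    have key : ∑ i ∈ range (m + 1), motzkin i * motzkin (m + 1 - 1 - i)
        = ∑ k ∈ range (m + 2), (m + 1).choose (2 * k + 1) * catalan (k + 1) := by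
      have step1 : ∀ i ∈ range (m + 1), motzkin i * motzkin (m + 1 - 1 - i)
          = ∑ p ∈ range (m + 2), ∑ q ∈ range (m + 2),
              (i.choose (2 * p) * (m - i).choose (2 * q)) * (catalan p * catalan q) := by
        intro i hi
        simp only [mem_range] at hi
        rw [show m + 1 - 1 - i = m - i by omega, motzkin_pad i (m + 2) (by omega),
            motzkin_pad (m - i) (m + 2) (by omega), Finset.sum_mul_sum]
        apply sum_congr rfl; intro p _; apply sum_congr rfl; intro q _; ring
      rw [Finset.sum_congr rfl step1, Finset.sum_comm]
      have step2 : ∀ p ∈ range (m + 2),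
          ∑ i ∈ range (m + 1), ∑ q ∈ range (m + 2),
              (i.choose (2 * p) * (m - i).choose (2 * q)) * (catalan p * catalan q)
          = ∑ q ∈ range (m + 2),
              (m + 1).choose (2 * (p + q) + 1) * (catalan p * catalan q) := by
        intro p _
        rw [Finset.sum_comm]
        apply sum_congr rfl
        intro q _
        rw [← Finset.sum_mul, VU m (2 * p) (2 * q)]
        congr 2
        ring
      rw [Finset.sum_congr rfl step2]
      rw [square_to_triangle (fun p q => (m + 1).choose (2 * (p + q) + 1) * (catalan p * catalan q))
            (m + 2) (by
              intro p q h
              show (m + 1).choose (2 * (p + q) + 1) * (catalan p * catalan q) = 0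
              rw [Nat.choose_eq_zero_of_lt (by omega), zero_mul])]
      apply sum_congr rfl
      intro k hk
      have hinner : ∀ p ∈ range (k + 1),
          (m + 1).choose (2 * (p + (k - p)) + 1) * (catalan p * catalan (k - p))
          = (m + 1).choose (2 * k + 1) * (catalan p * catalan (k - p)) := by
        intro p hp
        simp only [mem_range] at hp
        congr 3
        omega
      rw [Finset.sum_congr rfl hinner, ← Finset.mul_sum, cat_conv]
    rw [key]
    conv_lhs => rw [motzkin]
    rw [Finset.sum_range_succ' (fun k => (m + 1 + 1).choose (2 * k) * catalan k) (m + 2)]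
    have pas : ∀ k ∈ range (m + 2), (m + 1 + 1).choose (2 * (k + 1)) * catalan (k + 1)
        = (m + 1).choose (2 * k + 1) * catalan (k + 1)
          + (m + 1).choose (2 * (k + 1)) * catalan (k + 1) := by
      intro k _
      rw [show 2 * (k + 1) = (2 * k + 1) + 1 by ring, Nat.choose_succ_succ (m + 1) (2 * k + 1),
        Nat.add_mul]
    rw [Finset.sum_congr rfl pas, Finset.sum_add_distrib]
    have mpad : motzkin (m + 1)
        = ∑ k ∈ range (m + 2), (m + 1).choose (2 * (k + 1)) * catalan (k + 1)
          + (m + 1).choose (2 * 0) * catalan 0 := by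
      rw [motzkin_pad (m + 1) (m + 3) (by omega),
        Finset.sum_range_succ' (fun k => (m + 1).choose (2 * k) * catalan k) (m + 2)]
    rw [mpad]
    simp
    omega

def cN : ℕ → ℕ
  | 0 => 1
  | 1 => 0
  | (n + 2) => ∑ i ∈ (Finset.range (n + 1)).attach, cN i.1 * motzkin (n - i.1)
decreasing_by have := Finset.mem_range.mp i.2; omega

lemma cN_zero : cN 0 = 1 := by simp [cN]
lemma cN_one : cN 1 = 0 := by simp [cN]
lemma cN_two_add (n : ℕ) : cN (n + 2) = ∑ i ∈ range (n + 1), cN i * motzkin (n - i) := by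
  rw [cN]; exact Finset.sum_attach (range (n + 1)) (fun i => cN i * motzkin (n - i))

lemma motzkin_one : motzkin 1 = 1 := by
  simp [motzkin, Finset.sum_range_succ, Nat.choose]

lemma motzkin_eq_cN (n : ℕ) : motzkin n = cN n + cN (n + 1) := by
  induction n using Nat.strong_induction_on with
  | _ n ih =>
    match n with
    | 0 => rw [motzkin_zero, cN_zero, cN_one]
    | 1 => rw [motzkin_one, cN_one, cN_two_add 0, Finset.sum_range_one, cN_zero, motzkin_zero]
    | (k + 2) =>
      rw [motzkin_rec (k + 1)]
      have hs : ∑ i ∈ range (k + 1), motzkin i * motzkin (k + 1 - 1 - i)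
          = ∑ i ∈ range (k + 1), (cN i * motzkin (k - i) + cN (i + 1) * motzkin (k - i)) := by
        apply sum_congr rfl
        intro i hi
        simp only [mem_range] at hi
        rw [show k + 1 - 1 - i = k - i by omega, ih i (by omega), Nat.add_mul]
      rw [hs, Finset.sum_add_distrib, ← cN_two_add k]
      have h3 : cN (k + 3) = motzkin (k + 1) + ∑ i ∈ range (k + 1), cN (i + 1) * motzkin (k - i) := by
        rw [show k + 3 = (k + 1) + 2 by omega, cN_two_add (k + 1),
          Finset.sum_range_succ' (fun i => cN i * motzkin (k + 1 - i)) (k + 1), cN_zero, one_mul]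
        have he : ∀ i ∈ range (k + 1), cN (i + 1) * motzkin (k + 1 - (i + 1))
            = cN (i + 1) * motzkin (k - i) := by
          intro i hi; congr 2; omega
        rw [Finset.sum_congr rfl he]
        simp only [Nat.sub_zero]
        omega
      rw [show k + 2 + 1 = k + 3 by omega, h3]
      omega

namespace PlaneTree

/-- sum over all children of (isLeafInd + youngLeaves) -/
def yAll : PlaneTree → ℕ
  | node ts => (ts.map (fun s => isLeafInd s + youngLeaves s)).sum

lemma edges_node (ts : List PlaneTree) :
    edges (node ts) = (ts.map (fun t => edges t + 1)).sum := by
  rw [edges]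
  rw [List.attach_map_val (l := ts) (f := fun t => edges t + 1)]

lemma edges_nil : edges (node []) = 0 := by simp [edges_node]

lemma edges_cons (t : PlaneTree) (ts : List PlaneTree) :
    edges (node (t :: ts)) = edges t + 1 + edges (node ts) := by
  simp [edges_node]

lemma young_nil : youngLeaves (node []) = 0 := by rw [youngLeaves]

lemma young_cons (t : PlaneTree) (ts : List PlaneTree) :
    youngLeaves (node (t :: ts)) = youngLeaves t + yAll (node ts) := by
  rw [youngLeaves, yAll]
  rw [List.attach_map_val (l := ts) (f := fun s => isLeafInd s + youngLeaves s)]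

lemma yAll_nil : yAll (node []) = 0 := by rw [yAll]; simp

lemma yAll_cons (t : PlaneTree) (ts : List PlaneTree) :
    yAll (node (t :: ts)) = (isLeafInd t + youngLeaves t) + yAll (node ts) := by
  simp [yAll]

lemma edges_eq_zero_iff (T : PlaneTree) : edges T = 0 ↔ T = node [] := by
  obtain ⟨ts⟩ := T
  cases ts with
  | nil => simp [edges_nil]
  | cons t ts => simp [edges_cons]

end PlaneTree

namespace PlaneTree

def cons (t : PlaneTree) : PlaneTree → PlaneTree
  | node ts => node (t :: ts)

def headT : PlaneTree → PlaneTree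
  | node [] => node []
  | node (t :: _) => t

def tailT : PlaneTree → PlaneTree
  | node [] => node []
  | node (_ :: ts) => node ts

lemma cons_head_tail {T : PlaneTree} (h : T ≠ node []) : cons (headT T) (tailT T) = T := by
  obtain ⟨ts⟩ := T
  cases ts with
  | nil => exact absurd rfl h
  | cons t ts => rfl

lemma edges_head_tail {T : PlaneTree} (h : T ≠ node []) :
    edges T = edges (headT T) + 1 + edges (tailT T) := by
  obtain ⟨ts⟩ := T
  cases ts with
  | nil => exact absurd rfl h
  | cons t ts => exact edges_cons t ts

lemma edges_cons' (t u : PlaneTree) : edges (cons t u) = edges t + 1 + edges u := by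
  obtain ⟨ts⟩ := u; exact edges_cons t ts

lemma young_cons' (t u : PlaneTree) : youngLeaves (cons t u) = youngLeaves t + yAll u := by
  obtain ⟨ts⟩ := u; exact young_cons t ts

lemma yAll_cons' (t u : PlaneTree) :
    yAll (cons t u) = (isLeafInd t + youngLeaves t) + yAll u := by
  obtain ⟨ts⟩ := u; exact yAll_cons t ts

lemma cons_ne_nil (t u : PlaneTree) : cons t u ≠ node [] := by
  obtain ⟨ts⟩ := u; simp [cons]

lemma headT_cons (t u : PlaneTree) : headT (cons t u) = t := by
  obtain ⟨ts⟩ := u; rfl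

lemma tailT_cons (t u : PlaneTree) : tailT (cons t u) = u := by
  obtain ⟨ts⟩ := u; rfl

instance finite_le : ∀ n : ℕ, Finite {T : PlaneTree // edges T ≤ n} := by
  intro n
  induction n with
  | zero =>
    apply Finite.of_injective (fun _ => ())
    rintro ⟨T, hT⟩ ⟨U, hU⟩ _
    have h1 : T = node [] := (edges_eq_zero_iff T).mp (Nat.le_zero.mp hT)
    have h2 : U = node [] := (edges_eq_zero_iff U).mp (Nat.le_zero.mp hU)
    simp [h1, h2]
  | succ n ih =>
    classical
    haveI := ih
    apply Finite.of_injective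
      (fun X : {T : PlaneTree // edges T ≤ n + 1} =>
        if h : X.1 = node [] then
          (Sum.inl () : Unit ⊕ ({T : PlaneTree // edges T ≤ n} × {T : PlaneTree // edges T ≤ n}))
        else Sum.inr (⟨headT X.1, by have := edges_head_tail h; omega⟩,
                   ⟨tailT X.1, by have := edges_head_tail h; omega⟩))
    rintro ⟨T, hT⟩ ⟨U, hU⟩ hfeq
    simp only at hfeq
    ext
    by_cases h1 : T = node [] <;> by_cases h2 : U = node []
    · show T = U; rw [h1, h2]
    · rw [dif_pos h1, dif_neg h2] at hfeq; simp at hfeq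
    · rw [dif_neg h1, dif_pos h2] at hfeq; simp at hfeq
    · rw [dif_neg h1, dif_neg h2] at hfeq
      simp only [Sum.inr.injEq, Prod.mk.injEq, Subtype.mk.injEq] at hfeq
      show T = U
      rw [← cons_head_tail h1, ← cons_head_tail h2, hfeq.1, hfeq.2]

instance finite_pred (n : ℕ) (P : PlaneTree → Prop) : Finite {T : PlaneTree // edges T = n ∧ P T} := by
  apply Finite.of_injective
    (fun X : {T : PlaneTree // edges T = n ∧ P T} =>
      (⟨X.1, le_of_eq X.2.1⟩ : {T : PlaneTree // edges T ≤ n}))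
  rintro ⟨T, hT⟩ ⟨U, hU⟩ h
  simpa using h

end PlaneTree

namespace PlaneTree

noncomputable def decompEquiv (n : ℕ) (f g : PlaneTree → ℕ)
    (hf : ∀ t u, f (cons t u) = g t + yAll u) :
    {T : PlaneTree // edges T = n + 1 ∧ f T = 0}
      ≃ Σ i : Fin (n + 1),
          {t : PlaneTree // edges t = i.1 ∧ g t = 0}
            × {u : PlaneTree // edges u = n - i.1 ∧ yAll u = 0} where
  toFun := fun ⟨T, hT⟩ =>
    have hne : T ≠ node [] := fun h => by
      rw [h, edges_nil] at hT; exact Nat.succ_ne_zero n hT.1.symm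
    have hsum : edges T = edges (headT T) + 1 + edges (tailT T) := edges_head_tail hne
    have hfT : f T = g (headT T) + yAll (tailT T) := by
      conv_lhs => rw [← cons_head_tail hne]
      exact hf _ _
    ⟨⟨edges (headT T), by omega⟩,
      ⟨headT T, rfl, by omega⟩,
      ⟨tailT T, by show edges (tailT T) = n - edges (headT T); omega, by omega⟩⟩
  invFun := fun ⟨i, ⟨t, ht⟩, ⟨u, hu⟩⟩ =>
    ⟨cons t u, by
      rw [edges_cons', hf]
      have := i.2
      refine ⟨by omega, by omega⟩⟩
  left_inv := by
    rintro ⟨T, hT⟩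
    have hne : T ≠ node [] := fun h => by
      rw [h, edges_nil] at hT; exact Nat.succ_ne_zero n hT.1.symm
    simp only [Subtype.mk.injEq]
    exact cons_head_tail hne
  right_inv := by
    rintro ⟨⟨i, hi⟩, ⟨t, ht⟩, ⟨u, hu⟩⟩
    obtain ⟨us⟩ := u
    have hti : edges t = i := ht.1
    subst hti
    rfl

lemma card_decomp (n : ℕ) (f g : PlaneTree → ℕ)
    (hf : ∀ t u, f (cons t u) = g t + yAll u) :
    Nat.card {T : PlaneTree // edges T = n + 1 ∧ f T = 0}
      = ∑ i ∈ Finset.range (n + 1),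
          Nat.card {t : PlaneTree // edges t = i ∧ g t = 0}
            * Nat.card {u : PlaneTree // edges u = n - i ∧ yAll u = 0} := by
  rw [Nat.card_congr (decompEquiv n f g hf)]
  haveI I1 : ∀ i : ℕ, Fintype {t : PlaneTree // edges t = i ∧ g t = 0} :=
    fun i => Fintype.ofFinite _
  haveI I2 : ∀ i : ℕ, Fintype {u : PlaneTree // edges u = n - i ∧ yAll u = 0} :=
    fun i => Fintype.ofFinite _
  rw [Nat.card_eq_fintype_card, Fintype.card_sigma]
  rw [← Fin.sum_univ_eq_sum_range (fun i =>
    Nat.card {t : PlaneTree // edges t = i ∧ g t = 0}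
      * Nat.card {u : PlaneTree // edges u = n - i ∧ yAll u = 0}) (n + 1)]
  apply Finset.sum_congr rfl
  intro i _
  rw [Fintype.card_prod]
  rw [Nat.card_eq_fintype_card (α := {t : PlaneTree // edges t = i.1 ∧ g t = 0}),
      Nat.card_eq_fintype_card (α := {u : PlaneTree // edges u = n - i.1 ∧ yAll u = 0})]

end PlaneTree


namespace PlaneTree

lemma isLeafInd_eq_zero {t : PlaneTree} (h : t ≠ node []) : isLeafInd t = 0 := by
  obtain ⟨ts⟩ := t
  cases ts with
  | nil => exact absurd rfl h
  | cons a as => rfl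

/-- number of no-young-leaves trees with n edges -/
noncomputable def aT (n : ℕ) : ℕ :=
  Nat.card {T : PlaneTree // edges T = n ∧ youngLeaves T = 0}

noncomputable def cT (n : ℕ) : ℕ :=
  Nat.card {T : PlaneTree // edges T = n ∧ yAll T = 0}

lemma card_edges_zero (P : PlaneTree → ℕ) (hP : P (node []) = 0) :
    Nat.card {T : PlaneTree // edges T = 0 ∧ P T = 0} = 1 := by
  rw [Nat.card_eq_one_iff_unique]
  constructor
  · constructor
    rintro ⟨T, hT⟩ ⟨U, hU⟩
    have h1 := (edges_eq_zero_iff T).mp hT.1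
    have h2 := (edges_eq_zero_iff U).mp hU.1
    simp [h1, h2]
  · exact ⟨⟨node [], (edges_eq_zero_iff _).mpr rfl, hP⟩⟩

lemma aT_zero : aT 0 = 1 := card_edges_zero youngLeaves young_nil
lemma cT_zero : cT 0 = 1 := card_edges_zero yAll yAll_nil

lemma aT_succ (n : ℕ) :
    aT (n + 1) = ∑ i ∈ Finset.range (n + 1), aT i * cT (n - i) :=
  card_decomp n youngLeaves youngLeaves young_cons'

noncomputable def bT (n : ℕ) : ℕ :=
  Nat.card {t : PlaneTree // edges t = n ∧ isLeafInd t + youngLeaves t = 0}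

lemma cT_succ (n : ℕ) :
    cT (n + 1) = ∑ i ∈ Finset.range (n + 1), bT i * cT (n - i) :=
  card_decomp n yAll (fun t => isLeafInd t + youngLeaves t) yAll_cons'

lemma bT_zero : bT 0 = 0 := by
  rw [bT, Nat.card_eq_zero]
  left
  constructor
  rintro ⟨T, hT⟩
  have h1 := (edges_eq_zero_iff T).mp hT.1
  subst h1
  have : isLeafInd (node []) = 1 := rfl
  omega

lemma bT_succ (n : ℕ) : bT (n + 1) = aT (n + 1) := by
  rw [bT, aT]
  apply Nat.card_congr
  apply Equiv.subtypeEquivRight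
  intro t
  constructor
  · rintro ⟨h1, h2⟩; exact ⟨h1, by omega⟩
  · rintro ⟨h1, h2⟩
    refine ⟨h1, ?_⟩
    have hne : t ≠ node [] := by
      intro h; rw [h, (edges_eq_zero_iff (node [])).mpr rfl] at h1; omega
    rw [isLeafInd_eq_zero hne]
    omega

lemma sumrev (n : ℕ) :
    ∑ j ∈ Finset.range n, motzkin j * cN (n - 1 - j) = cN (n + 1) := by
  cases n with
  | zero => simp [cN_one]
  | succ k =>
    rw [show k + 1 + 1 = k + 2 by omega, cN_two_add k,
      ← Finset.sum_range_reflect (fun i => cN i * motzkin (k - i)) (k + 1)]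
    apply Finset.sum_congr rfl
    intro j hj
    simp only [Finset.mem_range] at hj
    have h1 : k + 1 - 1 - j = k - j := by omega
    have h2 : k - (k - j) = j := by omega
    rw [h1, h2, Nat.mul_comm]

lemma main_count : ∀ n : ℕ, cT n = cN n ∧ (1 ≤ n → aT n = motzkin (n - 1)) := by
  intro n
  induction n using Nat.strong_induction_on with
  | _ n ih =>
    match n with
    | 0 => exact ⟨by rw [cT_zero, cN_zero], by omega⟩
    | (n + 1) =>
      have hA : aT (n + 1) = motzkin n := by
        rw [aT_succ, Finset.sum_range_succ' (fun i => aT i * cT (n - i)) n]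
        have he : ∀ i ∈ Finset.range n, aT (i + 1) * cT (n - (i + 1))
            = motzkin i * cN (n - 1 - i) := by
          intro i hi
          simp only [Finset.mem_range] at hi
          rw [(ih (i + 1) (by omega)).2 (by omega), Nat.add_sub_cancel,
            (ih (n - (i + 1)) (by omega)).1, show n - (i + 1) = n - 1 - i by omega]
        rw [Finset.sum_congr rfl he, sumrev, aT_zero, Nat.sub_zero, one_mul,
          (ih n (by omega)).1, motzkin_eq_cN n]
        omega
      refine ⟨?_, fun _ => by simpa using hA⟩
      rw [cT_succ, Finset.sum_range_succ' (fun i => bT i * cT (n - i)) n, bT_zero,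
        Nat.zero_mul, Nat.add_zero]
      have he : ∀ i ∈ Finset.range n, bT (i + 1) * cT (n - (i + 1))
          = motzkin i * cN (n - 1 - i) := by
        intro i hi
        simp only [Finset.mem_range] at hi
        rw [bT_succ, (ih (i + 1) (by omega)).2 (by omega), Nat.add_sub_cancel,
          (ih (n - (i + 1)) (by omega)).1, show n - (i + 1) = n - 1 - i by omega]
      rw [Finset.sum_congr rfl he, sumrev]

end PlaneTree

/-- The number of plane trees with `n` edges having no young leaves is `M_{n-1}`. -/
theorem card_planeTrees_no_young (n : ℕ) (hn : 1 ≤ n) :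
    Nat.card {T : PlaneTree // T.edges = n ∧ T.youngLeaves = 0} = motzkin (n - 1) :=
  (PlaneTree.main_count n).2 hn
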